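/- With L and g as in the de Jonquières setting (g(S_2)=S_2, g(e_k)=S_2-e_k for k=1,...,n-1, g(S_1)=S_1+((n-1)/2)S_2-e_1-...-e_{n-1}, n odd), the fixed sublattice L^g equals the span of S_2 and 2S_1 - e_1 - ... - e_{n-1}. -/

import Mathlib

open Fin.NatCast
/-- In the de Jonquières setting (same lattice and isometry `g` as above,
`n ≥ 5` odd), the fixed sublattice `L^g` equals the span of `S₂` and
`2S₁ - e₁ - ⋯ - e_{n-1}`. -/
theorem stmt_13 (n : ℕ) (hn : 5 ≤ n) (hodd : Odd n)
    (Q : (Fin (n+1) → ℤ) → (Fin (n+1) → ℤ) → ℤ)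
    (hQ : ∀ x y, Q x y = x 0 * y 1 + x 1 * y 0 -
        ∑ i : Fin (n+1), (if 2 ≤ (i : ℕ) then x i * y i else 0))
    (S₁ S₂ : Fin (n+1) → ℤ)
    (hS₁ : S₁ = fun i : Fin (n+1) => if (i : ℕ) = 0 then 1 else 0)
    (hS₂ : S₂ = fun i : Fin (n+1) => if (i : ℕ) = 1 then 1 else 0)
    (e : ℕ → (Fin (n+1) → ℤ))
    (he : ∀ k, e k = fun i : Fin (n+1) => if (i : ℕ) = k + 1 then 1 else 0)
    (g : (Fin (n+1) → ℤ) ≃ₗ[ℤ] (Fin (n+1) → ℤ))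
    (hgQ : ∀ x y, Q (g x) (g y) = Q x y)
    (hgS₁ : g S₁ = S₁ + (((n-1)/2 : ℕ) : ℤ) • S₂ - ∑ k ∈ Finset.Icc 1 (n-1), e k)
    (hgS₂ : g S₂ = S₂)
    (hge : ∀ k, 1 ≤ k → k ≤ n-1 → g (e k) = S₂ - e k) :
    ∀ x : Fin (n+1) → ℤ, g x = x ↔
      x ∈ Submodule.span ℤ
        ({S₂, (2 : ℤ) • S₁ - ∑ k ∈ Finset.Icc 1 (n-1), e k} : Set (Fin (n+1) → ℤ)) := by
  obtain ⟨m0, hm0⟩ := hodd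
  set M : Fin (n+1) → ℤ := ∑ k ∈ Finset.Icc 1 (n-1), e k with hMdef
  have hval0 : ((0 : Fin (n+1)) : ℕ) = 0 := rfl
  have hval1 : ((1 : Fin (n+1)) : ℕ) = 1 := by
    rw [Fin.val_one']; exact Nat.mod_eq_of_lt (by omega)
  -- coordinates of M
  have hM : ∀ j : Fin (n+1), M j = if 2 ≤ (j:ℕ) then 1 else 0 := by
    intro j
    have hj : (j:ℕ) ≤ n := Nat.lt_succ_iff.mp j.isLt
    have hterm : ∀ k ∈ Finset.Icc 1 (n-1),
        e k j = if k = (j:ℕ) - 1 ∧ 2 ≤ (j:ℕ) then 1 else 0 := by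
      intro k hk
      simp only [Finset.mem_Icc] at hk
      simp only [he]
      split_ifs <;> omega
    rw [hMdef, Finset.sum_apply, Finset.sum_congr rfl hterm]
    by_cases h2 : 2 ≤ (j:ℕ)
    · simp only [h2, and_true]
      rw [Finset.sum_ite_eq' (Finset.Icc 1 (n-1)) ((j:ℕ)-1) (fun _ => (1:ℤ))]
      rw [if_pos (Finset.mem_Icc.mpr (by omega))]
      simp
    · simp only [h2, and_false, if_false, Finset.sum_const_zero]
  intro x
  -- coordinates of the weighted sum
  have hsumx : ∀ j : Fin (n+1),
      (∑ k ∈ Finset.Icc 1 (n-1), x ((k+1 : ℕ) : Fin (n+1)) • e k) j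
        = if 2 ≤ (j:ℕ) then x j else 0 := by
    intro j
    have hj : (j:ℕ) ≤ n := Nat.lt_succ_iff.mp j.isLt
    have hterm : ∀ k ∈ Finset.Icc 1 (n-1),
        (x ((k+1 : ℕ) : Fin (n+1)) • e k) j
          = if k = (j:ℕ) - 1 ∧ 2 ≤ (j:ℕ) then x j else 0 := by
      intro k hk
      simp only [Finset.mem_Icc] at hk
      simp only [he, Pi.smul_apply, smul_eq_mul]
      by_cases h : (j:ℕ) = k + 1
      · have hcast : ((k+1 : ℕ) : Fin (n+1)) = j := by
          apply Fin.ext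
          rw [Fin.val_cast_of_lt (by omega)]
          omega
        rw [hcast, if_pos h, mul_one, if_pos (by omega)]
      · rw [if_neg h, mul_zero, if_neg (by omega)]
    rw [Finset.sum_apply, Finset.sum_congr rfl hterm]
    by_cases h2 : 2 ≤ (j:ℕ)
    · simp only [h2, and_true]
      rw [Finset.sum_ite_eq' (Finset.Icc 1 (n-1)) ((j:ℕ)-1) (fun _ => x j)]
      rw [if_pos (Finset.mem_Icc.mpr (by omega))]
      simp
    · simp only [h2, and_false, if_false, Finset.sum_const_zero]
  -- decomposition of x in the standard basis
  have hdec : x = x 0 • S₁ + x 1 • S₂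
      + ∑ k ∈ Finset.Icc 1 (n-1), x ((k+1 : ℕ) : Fin (n+1)) • e k := by
    funext j
    have hj : (j:ℕ) ≤ n := Nat.lt_succ_iff.mp j.isLt
    simp only [Pi.add_apply, Pi.smul_apply, smul_eq_mul, hS₁, hS₂, hsumx j]
    by_cases h0 : (j:ℕ) = 0
    · have hj0 : j = 0 := Fin.ext h0
      subst hj0
      simp [hval0]
    · by_cases h1 : (j:ℕ) = 1
      · have hj1 : j = 1 := Fin.ext (h1.trans hval1.symm)
        subst hj1
        rw [hval1]
        norm_num
      · rw [if_neg h0, if_neg h1, if_pos (by omega)]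
        ring
  -- the image of x under g
  have hgx : g x = x 0 • (S₁ + (((n-1)/2 : ℕ) : ℤ) • S₂ - M) + x 1 • S₂
      + ((∑ k ∈ Finset.Icc 1 (n-1), x ((k+1 : ℕ) : Fin (n+1))) • S₂
          - ∑ k ∈ Finset.Icc 1 (n-1), x ((k+1 : ℕ) : Fin (n+1)) • e k) := by
    conv_lhs => rw [hdec]
    rw [map_add, map_add, map_smul, map_smul, hgS₁, hgS₂, map_sum]
    congr 1
    have hterm : ∀ k ∈ Finset.Icc 1 (n-1),
        g (x ((k+1 : ℕ) : Fin (n+1)) • e k)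
          = x ((k+1 : ℕ) : Fin (n+1)) • S₂ - x ((k+1 : ℕ) : Fin (n+1)) • e k := by
      intro k hk
      simp only [Finset.mem_Icc] at hk
      rw [map_smul, hge k hk.1 hk.2, smul_sub]
    rw [Finset.sum_congr rfl hterm, Finset.sum_sub_distrib, ← Finset.sum_smul]
  -- fixed point of g on (2:ℤ) • S₁ - M
  have hgv : g ((2:ℤ) • S₁ - M) = (2:ℤ) • S₁ - M := by
    have hcard : (Finset.Icc 1 (n-1)).card = n - 1 := by
      rw [Nat.card_Icc]; omega
    have hgM : g M = ((n-1 : ℕ) : ℤ) • S₂ - M := by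
      rw [hMdef, map_sum,
        Finset.sum_congr rfl
          (fun k hk => hge k (Finset.mem_Icc.mp hk).1 (Finset.mem_Icc.mp hk).2),
        Finset.sum_sub_distrib, Finset.sum_const, hcard,
        ← Nat.cast_smul_eq_nsmul (R := ℤ)]
    rw [map_sub, map_smul, hgS₁, hgM]
    funext j
    have hj : (j:ℕ) ≤ n := Nat.lt_succ_iff.mp j.isLt
    simp only [Pi.sub_apply, Pi.add_apply, Pi.smul_apply, smul_eq_mul, hS₁, hS₂, hM j]
    split_ifs <;> ring_nf <;> omega
  constructor
  · -- forward direction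
    intro hfix
    rw [hfix] at hgx
    have hkey : ∀ j : Fin (n+1), 2 ≤ (j:ℕ) → 2 * x j = - x 0 := by
      intro j h2
      have hc := congrFun hgx j
      have h0' : ¬((j:ℕ) = 0) := by omega
      have h1' : ¬((j:ℕ) = 1) := by omega
      simp only [Pi.add_apply, Pi.sub_apply, Pi.smul_apply, smul_eq_mul, hS₁, hS₂,
        hM j, hsumx j, h0', h1', h2, if_true, if_false] at hc
      ring_nf at hc ⊢
      linarith
    rw [Submodule.mem_span_pair]
    have h2n : (2 : ℕ) < n + 1 := by omega
    set j2 : Fin (n+1) := ⟨2, h2n⟩ with hj2def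
    refine ⟨x 1, -(x j2), ?_⟩
    funext j
    have hj : (j:ℕ) ≤ n := Nat.lt_succ_iff.mp j.isLt
    have hk2 : 2 * x j2 = - x 0 := hkey j2 (by simp [hj2def])
    simp only [Pi.add_apply, Pi.smul_apply, Pi.sub_apply, smul_eq_mul, hS₁, hS₂, hM j]
    by_cases h0 : (j:ℕ) = 0
    · have hj0 : j = 0 := Fin.ext h0
      subst hj0
      rw [hval0]
      norm_num
      omega
    · by_cases h1 : (j:ℕ) = 1
      · have hj1 : j = 1 := Fin.ext (h1.trans hval1.symm)
        subst hj1
        rw [hval1]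
        norm_num
      · have h2 : 2 ≤ (j:ℕ) := by omega
        have hk : 2 * x j = - x 0 := hkey j h2
        simp only [h0, h1, h2, if_true, if_false]
        ring_nf
        omega
  · -- backward direction
    intro hx
    rw [Submodule.mem_span_pair] at hx
    obtain ⟨a, b, hab⟩ := hx
    rw [← hab, map_add, map_smul, map_smul, hgS₂, hgv]
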